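/- Let A₀⁺ ∈ gl(3,ℂ) be the symmetric traceless matrix with rows (0, 1, i), (1, 0, 0), (i, 0, 0), and A₀⁻ the matrix with rows (0, 1, −i), (1, 0, 0), (−i, 0, 0). Then for each sign ±: (a) e^{∓iφ} A₀^± = ρ(φ) A₀^± ρ(−φ) for all φ ∈ ℝ, where ρ(φ) := exp(φ ê₁); (b) the stabilizer of A₀^± under the conjugation action of SO(3) is trivial, i.e. R A₀^± R⁻¹ = A₀^± with R ∈ SO(3) implies R = I₃; and (c) the stabilizer of A₀^± under the action (e^{iφ}, R) · A = e^{iφ} R A R⁻¹ of U(1) × SO(3) equals {(e^{iφ}, exp(±φ ê₁)) : φ ∈ ℝ}, a group isomorphic to U(1). -/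

import Mathlib

open Matrix

noncomputable section

abbrev M3R : Type := Matrix (Fin 3) (Fin 3) ℝ
abbrev M3C : Type := Matrix (Fin 3) (Fin 3) ℂ

def isSO3 (R : M3R) : Prop := R * Rᵀ = 1 ∧ R.det = 1

def toC (R : M3R) : M3C := R.map (fun x => (x : ℂ))

/-- `ê₁`, the skew-symmetric matrix with `ê₁ x = e₁ × x`. -/
def e1hat : M3R := !![0, 0, 0; 0, 0, -1; 0, 1, 0]

/-- `ρ(θ) = exp(θ ê₁)`, the matrix exponential of `θ ê₁`. -/
def rho1 (θ : ℝ) : M3R := NormedSpace.exp (θ • e1hat)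

/-- `A₀^± ∈ gl(3,ℂ)` with rows `(0, 1, ±i), (1, 0, 0), (±i, 0, 0)`, where `s = ±1`. -/
def A0s (s : ℝ) : M3C :=
  !![0, 1, (s : ℂ) * Complex.I; 1, 0, 0; (s : ℂ) * Complex.I, 0, 0]

/-- The stabilizer of `A₀^±` in `U(1) × SO(3)` for the action
`(e^{iφ}, R) · A = e^{iφ} R A R⁻¹`. -/
def StabS (s : ℝ) : Set (ℂ × M3R) :=
  {g | (‖g.1‖ = 1 ∧ isSO3 g.2) ∧ g.1 • (toC g.2 * A0s s * (toC g.2)⁻¹) = A0s s}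

/-! ### Auxiliary material -/

open Complex

/-- explicit rotation about the x-axis -/
def RotX (θ : ℝ) : M3R :=
  !![1,0,0; 0, Real.cos θ, -Real.sin θ; 0, Real.sin θ, Real.cos θ]

lemma toC_cont : Continuous toC :=
  continuous_matrix fun i j => (Complex.continuous_ofReal).comp (continuous_apply_apply i j)

lemma toC_mul (A B : M3R) : toC (A * B) = toC A * toC B :=
  map_mul ((algebraMap ℝ ℂ).mapMatrix : M3R →+* M3C) A B

lemma toC_one : toC (1 : M3R) = 1 :=
  map_one ((algebraMap ℝ ℂ).mapMatrix : M3R →+* M3C)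

lemma toC_inj : Function.Injective toC := by
  intro A B h
  ext i j
  have := congrFun (congrFun h i) j
  simpa [toC] using this

def Pm : M3C := !![1,0,0; 0,1,1; 0,-I,I]
def Qm : M3C := !![1,0,0; 0,1/2,I/2; 0,1/2,-I/2]

lemma diag3 (a b c : ℂ) : diagonal ![a,b,c] = !![a,0,0;0,b,0;0,0,c] := by
  ext i j
  fin_cases i <;> fin_cases j <;>
    simp [Matrix.diagonal_apply, Matrix.vecHead, Matrix.vecTail]

lemma PQ : Pm * Qm = 1 := by
  ext i j
  fin_cases i <;> fin_cases j <;>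
    simp [Pm, Qm, Matrix.mul_apply, Fin.sum_univ_three, Matrix.vecHead, Matrix.vecTail] <;>
    ring_nf <;> simp [Complex.I_sq] <;> ring_nf

lemma QP : Qm * Pm = 1 := by
  ext i j
  fin_cases i <;> fin_cases j <;>
    simp [Pm, Qm, Matrix.mul_apply, Fin.sum_univ_three, Matrix.vecHead, Matrix.vecTail] <;>
    ring_nf <;> simp [Complex.I_sq] <;> ring_nf

lemma Pm_inv : Pm⁻¹ = Qm := Matrix.inv_eq_right_inv PQ

lemma key1 (θ : ℝ) :
    toC (θ • e1hat) = Pm * diagonal ![0, θ * I, -θ * I] * Qm := by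
  rw [diag3]
  ext i j
  fin_cases i <;> fin_cases j <;>
    simp [Pm, Qm, toC, e1hat, Matrix.mul_apply, Fin.sum_univ_three, Matrix.vecHead,
      Matrix.vecTail] <;> ring_nf <;> simp [Complex.I_sq] <;> ring_nf

lemma key2 (θ : ℝ) :
    toC (RotX θ) = Pm * diagonal ![1, Complex.exp (θ * I), Complex.exp (-θ * I)] * Qm := by
  have h1 : Complex.exp (θ * I) = (Real.cos θ : ℂ) + (Real.sin θ : ℂ) * I := by
    rw [Complex.exp_mul_I, Complex.ofReal_cos, Complex.ofReal_sin]
  have h2 : Complex.exp (-θ * I) = (Real.cos θ : ℂ) - (Real.sin θ : ℂ) * I := by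
    rw [show (-θ : ℂ) = ((-θ : ℝ) : ℂ) by push_cast; ring, Complex.exp_mul_I,
      Complex.ofReal_neg, Complex.cos_neg, Complex.sin_neg, Complex.ofReal_cos,
      Complex.ofReal_sin]
    ring
  rw [diag3, h1, h2]
  ext i j
  fin_cases i <;> fin_cases j <;>
    simp [Pm, Qm, toC, RotX, Matrix.mul_apply, Fin.sum_univ_three, Matrix.vecHead,
      Matrix.vecTail] <;> ring_nf <;> simp [Complex.I_sq] <;> ring_nf

section ExpSection

attribute [local instance] Matrix.linftyOpNormedAddCommGroup Matrix.linftyOpNormedRing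
  Matrix.linftyOpNormedAlgebra

lemma rho1_eq (θ : ℝ) : rho1 θ = RotX θ := by
  apply toC_inj
  have hmap : toC (rho1 θ) = NormedSpace.exp (toC (θ • e1hat)) := by
    have h : toC = ((algebraMap ℝ ℂ).mapMatrix : M3R →+* M3C) := rfl
    rw [rho1, h]
    exact NormedSpace.map_exp ((algebraMap ℝ ℂ).mapMatrix) toC_cont _
  rw [hmap, key1, ← Pm_inv,
    Matrix.exp_conj Pm _ ⟨⟨Pm, Qm, PQ, QP⟩, rfl⟩, Pm_inv, Matrix.exp_diagonal, key2]
  have h2 : (NormedSpace.exp ![0, (θ:ℂ) * I, -θ * I] : Fin 3 → ℂ)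
      = ![1, Complex.exp (θ * I), Complex.exp (-θ * I)] := by
    rw [Pi.exp_def]
    funext i
    fin_cases i <;> simp [← Complex.exp_eq_exp_ℂ]
  rw [h2]

end ExpSection

lemma RotX_transpose (θ : ℝ) : (RotX θ)ᵀ = RotX (-θ) := by
  ext i j
  fin_cases i <;> fin_cases j <;>
    simp [RotX, Real.cos_neg, Real.sin_neg, Matrix.vecHead, Matrix.vecTail]

lemma RotX_mul_neg (θ : ℝ) : RotX θ * RotX (-θ) = 1 := by
  ext i j
  fin_cases i <;> fin_cases j <;>
    simp [RotX, Matrix.mul_apply, Fin.sum_univ_three, Matrix.vecHead, Matrix.vecTail,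
      Real.cos_neg, Real.sin_neg, Matrix.one_apply] <;>
    nlinarith [Real.sin_sq_add_cos_sq θ]

lemma RotX_neg_mul (θ : ℝ) : RotX (-θ) * RotX θ = 1 := by
  have := RotX_mul_neg (-θ); rwa [neg_neg] at this

lemma isSO3_RotX (θ : ℝ) : isSO3 (RotX θ) := by
  refine ⟨by rw [RotX_transpose]; exact RotX_mul_neg θ, ?_⟩
  rw [Matrix.det_fin_three]
  simp [RotX, Matrix.vecHead, Matrix.vecTail]
  nlinarith [Real.sin_sq_add_cos_sq θ]

lemma toC_RotX_inv (θ : ℝ) : (toC (RotX θ))⁻¹ = toC (RotX (-θ)) :=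
  Matrix.inv_eq_right_inv (by rw [← toC_mul, RotX_mul_neg, toC_one])

/-- Part (a), in RotX form. -/
lemma partA (s : ℝ) (hs : s = 1 ∨ s = -1) (φ : ℝ) :
    Complex.exp (-(s : ℂ) * (φ : ℂ) * Complex.I) • A0s s =
      toC (RotX φ) * A0s s * toC (RotX (-φ)) := by
  have h1 : Complex.exp ((φ:ℂ) * I) = Complex.cos φ + Complex.sin φ * I :=
    Complex.exp_mul_I _
  have h1' : Complex.exp (I * (φ:ℂ)) = Complex.cos φ + Complex.sin φ * I := by
    rw [mul_comm]; exact h1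
  have h2 : Complex.exp (-((φ:ℂ) * I)) = Complex.cos φ - Complex.sin φ * I := by
    rw [show -((φ:ℂ) * I) = (-(φ:ℂ)) * I by ring, Complex.exp_mul_I, Complex.cos_neg,
      Complex.sin_neg]
    ring
  have h2' : Complex.exp (-(I * (φ:ℂ))) = Complex.cos φ - Complex.sin φ * I := by
    rw [show -(I * (φ:ℂ)) = -((φ:ℂ) * I) by ring]; exact h2
  rcases hs with rfl | rfl <;>
  · ext i j
    fin_cases i <;> fin_cases j <;>
      simp [A0s, toC, RotX, Matrix.mul_apply, Fin.sum_univ_three, Matrix.vecHead,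
        Matrix.vecTail, Matrix.smul_apply, Real.cos_neg, Real.sin_neg, smul_eq_mul,
        h1, h1', h2, h2'] <;>
      ring_nf <;> simp [Complex.I_sq, h1, h1', h2, h2'] <;> ring_nf

/-- Part (b). -/
lemma partB (s : ℝ) (hs : s = 1 ∨ s = -1) :
    ∀ R : M3R, isSO3 R → toC R * A0s s * (toC R)⁻¹ = A0s s → R = 1 := by
  intro R hR hconj
  have hTT : Rᵀ * R = 1 := mul_eq_one_comm.mp hR.1
  have hinv : (toC R)⁻¹ = toC Rᵀ :=
    Matrix.inv_eq_right_inv (by rw [← toC_mul, hR.1, toC_one])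
  have hir : toC Rᵀ * toC R = 1 := by rw [← toC_mul, hTT, toC_one]
  have hcomm : toC R * A0s s = A0s s * toC R := by
    calc toC R * A0s s = toC R * A0s s * (toC Rᵀ * toC R) := by rw [hir, mul_one]
      _ = (toC R * A0s s * toC Rᵀ) * toC R :=
          (mul_assoc (toC R * A0s s) (toC Rᵀ) (toC R)).symm
      _ = A0s s * toC R := by rw [← hinv, hconj]
  have hdet := hR.2
  rw [Matrix.det_fin_three] at hdet
  rcases hs with rfl | rfl <;>
  · have h12 := congrFun (congrFun hcomm 1) 2
    have h11 := congrFun (congrFun hcomm 1) 1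
    have h21 := congrFun (congrFun hcomm 2) 1
    have h01 := congrFun (congrFun hcomm 0) 1
    have h10 := congrFun (congrFun hcomm 1) 0
    have h02 := congrFun (congrFun hcomm 0) 2
    simp [toC, A0s, Matrix.mul_apply, Fin.sum_univ_three, Matrix.vecHead, Matrix.vecTail,
      Matrix.map_apply, Complex.ext_iff] at h12 h11 h21 h01 h10 h02
    obtain ⟨e1, e2⟩ := h12
    obtain ⟨e3, e4⟩ := h21
    obtain ⟨e5, e6⟩ := h01
    obtain ⟨e7, e8⟩ := h10
    obtain ⟨e9, e10⟩ := h02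
    have z01 : R 0 1 = 0 := by linarith
    have z02 : R 0 2 = 0 := by linarith
    have z10 : R 1 0 = 0 := by linarith
    have z12 : R 1 2 = 0 := by linarith
    have z20 : R 2 0 = 0 := by linarith
    have z21 : R 2 1 = 0 := by linarith
    have d11 : R 1 1 = R 0 0 := by linarith
    have d22 : R 2 2 = R 0 0 := by linarith
    rw [z01, z02, z10, z12, z20, z21, d11, d22] at hdet
    ring_nf at hdet
    have ha : R 0 0 = 1 := by nlinarith [sq_nonneg (R 0 0 - 1), sq_nonneg (R 0 0 + 1)]
    ext i j
    fin_cases i <;> fin_cases j <;>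
      simp [Matrix.one_apply, ha, z01, z02, z10, z12, z20, z21, d11, d22]

lemma mem_unitary_of_norm (z : ℂ) (hn : ‖z‖ = 1) : z ∈ unitary ℂ := by
  have h1 : star z * z = 1 := by
    rw [Complex.star_def, mul_comm, Complex.mul_conj]
    norm_cast
    simp [Complex.normSq_eq_norm_sq, hn]
  refine ⟨h1, ?_⟩
  rwa [mul_comm] at h1

lemma norm_of_mem_unitary (z : ℂ) (hz : z ∈ unitary ℂ) : ‖z‖ = 1 := by
  have h1 := hz.1
  rw [Complex.star_def, mul_comm, Complex.mul_conj] at h1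
  have h2 : Complex.normSq z = 1 := by exact_mod_cast h1
  have := Complex.normSq_eq_norm_sq z
  rw [h2] at this
  nlinarith [norm_nonneg z]

/-- For each sign `s = ±1`: (a) `e^{∓iφ} A₀^± = ρ(φ) A₀^± ρ(-φ)`; (b) the stabilizer of
`A₀^±` under conjugation by `SO(3)` is trivial; (c) the stabilizer of `A₀^±` in
`U(1) × SO(3)` is `{(e^{iφ}, exp(±φ ê₁))}`, a group isomorphic to `U(1)`. -/
theorem stabilizers_Omega8_phase (s : ℝ) (hs : s = 1 ∨ s = -1) :
    (∀ φ : ℝ, Complex.exp (-(s : ℂ) * (φ : ℂ) * Complex.I) • A0s s =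
        toC (rho1 φ) * A0s s * toC (rho1 (-φ))) ∧
    (∀ R : M3R, isSO3 R → toC R * A0s s * (toC R)⁻¹ = A0s s → R = 1) ∧
    (StabS s = {g : ℂ × M3R | ∃ φ : ℝ,
        g = (Complex.exp (φ * Complex.I), rho1 (s * φ))} ∧
      ∃ f : ↥(StabS s) → ↥(unitary ℂ),
        Function.Bijective f ∧
          ∀ a b c : ↥(StabS s), c.val = a.val * b.val → f c = f a * f b) := by
  have hs2 : (s : ℂ) * (s : ℂ) = 1 := by rcases hs with rfl | rfl <;> norm_num
  have hA : ∀ φ : ℝ, Complex.exp (-(s : ℂ) * (φ : ℂ) * Complex.I) • A0s s =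
      toC (rho1 φ) * A0s s * toC (rho1 (-φ)) := by
    intro φ
    rw [rho1_eq, rho1_eq]
    exact partA s hs φ
  have hmem : ∀ φ : ℝ, ((Complex.exp (φ * Complex.I), rho1 (s * φ)) : ℂ × M3R) ∈ StabS s := by
    intro φ
    refine ⟨⟨Complex.norm_exp_ofReal_mul_I φ, by rw [rho1_eq]; exact isSO3_RotX _⟩, ?_⟩
    have ha := partA s hs (s * φ)
    have hexp : -(s:ℂ) * ((s*φ : ℝ) : ℂ) * Complex.I = -(φ:ℂ) * Complex.I := by
      push_cast
      calc -(s:ℂ) * ((s:ℂ) * (φ:ℂ)) * Complex.I = -((s:ℂ)*(s:ℂ)) * (φ:ℂ) * Complex.I := by ring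
        _ = -(φ:ℂ) * Complex.I := by rw [hs2]; ring
    rw [hexp] at ha
    show Complex.exp (φ * Complex.I) •
      (toC (rho1 (s*φ)) * A0s s * (toC (rho1 (s*φ)))⁻¹) = A0s s
    rw [rho1_eq, toC_RotX_inv, ← ha, smul_smul, ← Complex.exp_add]
    have h0 : (φ:ℂ) * Complex.I + -(φ:ℂ) * Complex.I = 0 := by ring
    rw [h0, Complex.exp_zero, one_smul]
  have hset : StabS s = {g : ℂ × M3R | ∃ φ : ℝ,
      g = (Complex.exp (φ * Complex.I), rho1 (s * φ))} := by
    ext ⟨z, R⟩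
    constructor
    · rintro ⟨⟨hn, hSO⟩, hact⟩
      refine ⟨z.arg, ?_⟩
      have habs : ‖z‖ = 1 := hn
      have hz : z = Complex.exp (z.arg * Complex.I) := by
        conv_lhs => rw [← Complex.norm_mul_exp_arg_mul_I z]
        rw [habs]
        simp
      obtain ⟨⟨_, hSO'⟩, hact'⟩ := hmem z.arg
      have hact2 : z • (toC (rho1 (s * z.arg)) * A0s s * (toC (rho1 (s * z.arg)))⁻¹) = A0s s := by
        have h := hmem z.arg
        obtain ⟨-, h⟩ := h
        dsimp only at h
        rwa [← hz] at h
      have hzne : z ≠ 0 := by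
        intro h; rw [h] at hn; simp at hn
      have hcc0 : toC R * A0s s * (toC R)⁻¹ =
          toC (rho1 (s * z.arg)) * A0s s * (toC (rho1 (s * z.arg)))⁻¹ := by
        have h := hact.trans hact2.symm
        exact smul_right_injective M3C hzne h
      set θ := s * z.arg with hθ
      have hRinv : (toC R)⁻¹ = toC Rᵀ :=
        Matrix.inv_eq_right_inv (by rw [← toC_mul, hSO.1, toC_one])
      have hcc : toC R * A0s s * toC Rᵀ = toC (RotX θ) * A0s s * toC (RotX (-θ)) := by
        rw [← hRinv, hcc0, rho1_eq, toC_RotX_inv]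
      have hSinv : (toC (RotX (-θ) * R))⁻¹ = toC (Rᵀ * RotX θ) := by
        apply Matrix.inv_eq_right_inv
        rw [← toC_mul]
        have h1 : RotX (-θ) * R * (Rᵀ * RotX θ) = 1 := by
          calc RotX (-θ) * R * (Rᵀ * RotX θ) = RotX (-θ) * (R * Rᵀ) * RotX θ := by
                noncomm_ring
            _ = RotX (-θ) * RotX θ := by rw [hSO.1, mul_one]
            _ = 1 := RotX_neg_mul θ
        rw [h1, toC_one]
      have hScond : toC (RotX (-θ) * R) * A0s s * (toC (RotX (-θ) * R))⁻¹ = A0s s := by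
        rw [hSinv, toC_mul, toC_mul]
        calc toC (RotX (-θ)) * toC R * A0s s * (toC Rᵀ * toC (RotX θ))
            = toC (RotX (-θ)) * (toC R * A0s s * toC Rᵀ) * toC (RotX θ) := by noncomm_ring
          _ = toC (RotX (-θ)) * (toC (RotX θ) * A0s s * toC (RotX (-θ))) * toC (RotX θ) := by
              rw [hcc]
          _ = (toC (RotX (-θ)) * toC (RotX θ)) * A0s s *
                (toC (RotX (-θ)) * toC (RotX θ)) := by noncomm_ring
          _ = A0s s := by rw [← toC_mul, RotX_neg_mul, toC_one, one_mul, mul_one]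
      have hSSO : isSO3 (RotX (-θ) * R) := by
        constructor
        · rw [Matrix.transpose_mul]
          calc RotX (-θ) * R * (Rᵀ * (RotX (-θ))ᵀ)
              = RotX (-θ) * (R * Rᵀ) * (RotX (-θ))ᵀ := by noncomm_ring
            _ = RotX (-θ) * (RotX (-θ))ᵀ := by rw [hSO.1, mul_one]
            _ = 1 := by rw [RotX_transpose, neg_neg]; exact RotX_neg_mul θ
        · rw [Matrix.det_mul, hSO.2, mul_one, (isSO3_RotX (-θ)).2]
      have hS1 : RotX (-θ) * R = 1 := partB s hs _ hSSO hScond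
      have hRfin : R = RotX θ := by
        have h2 := congrArg (fun M => RotX θ * M) hS1
        rw [← mul_assoc, RotX_mul_neg, one_mul, mul_one] at h2
        exact h2
      rw [Prod.ext_iff]
      exact ⟨by simpa using hz, by rw [rho1_eq]; simpa using hRfin⟩
    · rintro ⟨φ, hg⟩
      rw [hg]
      exact hmem φ
  refine ⟨hA, partB s hs, hset, ?_⟩
  refine ⟨fun g => ⟨g.val.1, mem_unitary_of_norm _ g.property.1.1⟩, ⟨?_, ?_⟩, ?_⟩
  · -- injective
    intro a b hab
    have h1 : a.val.1 = b.val.1 := congrArg Subtype.val hab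
    obtain ⟨φa, hφa⟩ := (Set.ext_iff.mp hset _).mp a.property
    obtain ⟨φb, hφb⟩ := (Set.ext_iff.mp hset _).mp b.property
    rw [hφa, hφb] at h1
    simp only at h1
    have hcos : Real.cos φa = Real.cos φb := by
      have := congrArg Complex.re h1
      rwa [Complex.exp_ofReal_mul_I_re, Complex.exp_ofReal_mul_I_re] at this
    have hsin : Real.sin φa = Real.sin φb := by
      have := congrArg Complex.im h1
      rwa [Complex.exp_ofReal_mul_I_im, Complex.exp_ofReal_mul_I_im] at this
    have hrho : rho1 (s * φa) = rho1 (s * φb) := by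
      rw [rho1_eq, rho1_eq]
      rcases hs with rfl | rfl <;>
        simp only [RotX, one_mul, neg_one_mul, Real.cos_neg, Real.sin_neg, hcos, hsin]
    apply Subtype.ext
    rw [hφa, hφb, Prod.ext_iff]
    exact ⟨h1, hrho⟩
  · -- surjective
    intro u
    have hnu : ‖u.val‖ = 1 := norm_of_mem_unitary _ u.property
    have habs : ‖u.val‖ = 1 := hnu
    have hu : u.val = Complex.exp (u.val.arg * Complex.I) := by
      conv_lhs => rw [← Complex.norm_mul_exp_arg_mul_I u.val]
      rw [habs]
      simp
    refine ⟨⟨(u.val, rho1 (s * u.val.arg)), ?_⟩, ?_⟩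
    · rw [hset]
      exact ⟨u.val.arg, by rw [Prod.ext_iff]; exact ⟨hu, rfl⟩⟩
    · apply Subtype.ext
      rfl
  · -- multiplicative
    intro a b c hc
    apply Subtype.ext
    show c.val.1 = (a.val * b.val).1
    rw [hc]
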